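/- Let A be an m×n integer matrix, and suppose the constraint matrix of the rangespace reformulation, (A; I)U with U unimodular, has columns forming an RKZ-reduced basis of L_R(A) = L((A; I)). Then the width of Q_R = { y : (ℓ_1; ℓ_2) ≤ (A; I)U y ≤ (w_1; w_2) } along e_n satisfies width(e_n, Q_R) ≤ √n · ‖(w_1; w_2) − (ℓ_1; ℓ_2)‖ / det(A Aᵀ + I)^{1/(2n)}. -/

import Mathlib

/-- The Gram-Schmidt orthogonalization of a finite family of vectors. -/
noncomputable def gsE {E : Type*} [NormedAddCommGroup E] [InnerProductSpace ℝ E] {r : ℕ}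
    (c : Fin r → E) : Fin r → E :=
  haveI : WellFoundedLT (Fin r) := inferInstance
  InnerProductSpace.gramSchmidt ℝ c

/-- The lattice generated by a family of vectors: all integer combinations. -/
noncomputable def latE {E : Type*} [NormedAddCommGroup E] [InnerProductSpace ℝ E] {r : ℕ}
    (c : Fin r → E) : AddSubgroup E :=
  AddSubgroup.closure (Set.range c)

/-- The length of a shortest nonzero vector of the lattice generated by `c`. -/
noncomputable def lambda1 {E : Type*} [NormedAddCommGroup E] [InnerProductSpace ℝ E] {r : ℕ}
    (c : Fin r → E) : ℝ :=
  sInf { t | ∃ v ∈ latE c, v ≠ 0 ∧ ‖v‖ = t }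

/-- The determinant of the lattice with basis `c` : the square root of the
Gram determinant of `c`. -/
noncomputable def latDet {E : Type*} [NormedAddCommGroup E] [InnerProductSpace ℝ E] {r : ℕ}
    (c : Fin r → E) : ℝ :=
  Real.sqrt (Matrix.det (Matrix.of fun i j : Fin r => (inner ℝ (c i) (c j) : ℝ)))

/-- Hermite's constant of rank `j`. -/
noncomputable def hermiteC (j : ℕ) : ℝ :=
  sSup { t | ∃ c : Fin j → EuclideanSpace ℝ (Fin j), LinearIndependent ℝ c ∧
    t = lambda1 c ^ 2 / latDet c ^ ((2 : ℝ) / j) }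

/-- `γ_j = max {C_1, ..., C_j}`. -/
noncomputable def gammaH (j : ℕ) : ℝ := sSup (hermiteC '' Set.Icc 1 j)

/-- Projection onto the orthogonal complement of the span of a set. -/
noncomputable def projPerp {E : Type*} [NormedAddCommGroup E] [InnerProductSpace ℝ E]
    [FiniteDimensional ℝ E] (S : Set E) (v : E) : E :=
  (Submodule.orthogonalProjectionOnto (Submodule.span ℝ S)ᗮ v : E)

/-- A family `c_0, ..., c_{r-1}` is Korkhine-Zolotarev reduced if for each `i`, the projection
`c_i(i)` of `c_i` onto the orthogonal complement of `span(c_0, ..., c_{i-1})` is a shortest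
nonzero vector of the lattice generated by the projections of the `c_j` onto that complement. -/
def KZReduced {E : Type*} [NormedAddCommGroup E] [InnerProductSpace ℝ E]
    [FiniteDimensional ℝ E] {r : ℕ} (c : Fin r → E) : Prop :=
  ∀ i : Fin r,
    ∀ v ∈ latE (fun j => projPerp (c '' { j : Fin r | j < i }) (c j)),
      v ≠ 0 → ‖projPerp (c '' { j : Fin r | j < i }) (c i)‖ ≤ ‖v‖

/-- A basis `b_0, ..., b_{r-1}` of a lattice is RKZ reduced if its reciprocal basis
(the unique family `b'` in the span with `⟨b_i, b'_j⟩ = 1` if `i + j = r + 1` (1-indexed)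
and `0` otherwise) is Korkhine-Zolotarev reduced. -/
def RKZReduced {E : Type*} [NormedAddCommGroup E] [InnerProductSpace ℝ E]
    [FiniteDimensional ℝ E] {r : ℕ} (b : Fin r → E) : Prop :=
  ∃ b' : Fin r → E,
    (∀ j, b' j ∈ Submodule.span ℝ (Set.range b)) ∧
    (∀ i j : Fin r, (inner ℝ (b i) (b' j) : ℝ) =
      if (i : ℕ) + (j : ℕ) + 1 = r then 1 else 0) ∧
    KZReduced b'

/-- The columns of a matrix with rows indexed by `ι`, as vectors in Euclidean space. -/
noncomputable def colsE' {ι : Type*} [Fintype ι] (r : ℕ) (B : Matrix ι (Fin r) ℝ) :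
    Fin r → EuclideanSpace ℝ ι :=
  fun j => (WithLp.equiv 2 (ι → ℝ)).symm fun i => B i j

open MeasureTheory Submodule Set Module

private lemma mink' {n : ℕ} (d : Basis (Fin (n+1)) ℝ (Fin (n+1) → ℝ)) {s : ℝ}
    (hV : volume (ZSpan.fundamentalDomain d) ≤ ENNReal.ofReal s ^ (n+1)) :
    ∃ v ∈ Submodule.span ℤ (Set.range ⇑d), v ≠ 0 ∧ ∀ i, |v i| ≤ s := by
  classical
  set L : AddSubgroup (Fin (n+1) → ℝ) := (span ℤ (Set.range ⇑d)).toAddSubgroup with hL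
  haveI : Countable L := inferInstanceAs (Countable (span ℤ (Set.range ⇑d)))
  set S : Set (Fin (n+1) → ℝ) := Set.pi Set.univ (fun _ => Set.Icc (-s) s) with hS
  have hsymm : ∀ x ∈ S, -x ∈ S := by
    intro x hx i _
    have := hx i (Set.mem_univ i)
    simp only [Set.mem_Icc] at this ⊢
    constructor <;> simp only [Pi.neg_apply] <;> linarith [this.1, this.2]
  have hconv : Convex ℝ S := convex_pi (fun i _ => convex_Icc _ _)
  have hcpt : IsCompact S := isCompact_univ_pi (fun i => isCompact_Icc)
  have hvolS : volume S = (ENNReal.ofReal (2*s)) ^ (n+1) := by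
    rw [hS, volume_pi_pi]
    simp [Real.volume_Icc]
    ring_nf
    rw [ENNReal.ofReal_mul' (by norm_num), ENNReal.ofReal_ofNat]
    ring
  have hle : volume (ZSpan.fundamentalDomain d) * 2 ^ (finrank ℝ (Fin (n+1) → ℝ)) ≤ volume S := by
    rw [hvolS, Module.finrank_fin_fun]
    calc volume (ZSpan.fundamentalDomain d) * 2 ^ (n+1)
        ≤ ENNReal.ofReal s ^ (n+1) * 2 ^ (n+1) := by gcongr
      _ = (ENNReal.ofReal (2*s)) ^ (n+1) := by
          rw [← mul_pow, ENNReal.ofReal_mul (by norm_num), mul_comm]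
          norm_num
  obtain ⟨x, hx0, hxS⟩ := exists_ne_zero_mem_lattice_of_measure_mul_two_pow_le_measure
    (ZSpan.isAddFundamentalDomain' d volume) hsymm hconv hcpt hle
  refine ⟨(x : Fin (n+1) → ℝ), x.2, ?_, ?_⟩
  · intro h
    exact hx0 (by ext; simp [h])
  · intro i
    have := hxS i (Set.mem_univ i)
    rw [Set.mem_Icc] at this
    exact abs_le.mpr this

private lemma mem_latE_of_mem_span {E : Type*} [NormedAddCommGroup E] [InnerProductSpace ℝ E]
    {r : ℕ} {c : Fin r → E} {x : E}
    (hx : x ∈ Submodule.span ℤ (Set.range c)) : x ∈ latE c := by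
  induction hx using Submodule.span_induction with
  | mem x h => exact AddSubgroup.subset_closure h
  | zero => exact zero_mem _
  | add x y hx hy hx' hy' => exact add_mem hx' hy'
  | smul a x hx hx' => exact AddSubgroup.zsmul_mem _ hx' a

private lemma exists_short {E : Type*} [NormedAddCommGroup E] [InnerProductSpace ℝ E]
    [FiniteDimensional ℝ E] {n : ℕ} {c : Fin (n+1) → E} (hc : LinearIndependent ℝ c)
    (G : Matrix (Fin (n+1)) (Fin (n+1)) ℝ) (hG : ∀ i j, G i j = (inner ℝ (c i) (c j) : ℝ)) :
    0 < G.det ∧ ∃ v ∈ latE c, v ≠ 0 ∧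
      ‖v‖ ≤ Real.sqrt ((n:ℝ)+1) * G.det ^ ((1:ℝ)/(2*((n:ℝ)+1))) := by
  classical
  set E₀ := span ℝ (Set.range c) with hE₀
  haveI : FiniteDimensional ℝ E₀ := FiniteDimensional.span_of_finite ℝ (Set.finite_range c)
  have hfr : finrank ℝ E₀ = n+1 := by
    rw [hE₀, finrank_span_eq_card hc, Fintype.card_fin]
  let φ : E₀ ≃ₗᵢ[ℝ] EuclideanSpace ℝ (Fin (n+1)) :=
    ((stdOrthonormalBasis ℝ E₀).reindex (finCongr hfr)).repr
  let c₀ : Fin (n+1) → E₀ := fun j => ⟨c j, subset_span (mem_range_self j)⟩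
  have hc₀ : LinearIndependent ℝ c₀ := by
    apply LinearIndependent.of_comp E₀.subtype
    exact hc
  let d : Fin (n+1) → EuclideanSpace ℝ (Fin (n+1)) := fun j => φ (c₀ j)
  have hd : LinearIndependent ℝ d :=
    hc₀.map' φ.toLinearEquiv.toLinearMap φ.toLinearEquiv.ker
  have hcard : Fintype.card (Fin (n+1)) = finrank ℝ (EuclideanSpace ℝ (Fin (n+1))) := by
    simp [finrank_euclideanSpace]
  let D : Basis (Fin (n+1)) ℝ (EuclideanSpace ℝ (Fin (n+1))) :=
    basisOfLinearIndependentOfCardEqFinrank hd hcard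
  have hD : ⇑D = d := coe_basisOfLinearIndependentOfCardEqFinrank _ _
  let e : EuclideanSpace ℝ (Fin (n+1)) ≃ₗ[ℝ] (Fin (n+1) → ℝ) :=
    WithLp.linearEquiv 2 ℝ (Fin (n+1) → ℝ)
  let D' : Basis (Fin (n+1)) ℝ (Fin (n+1) → ℝ) := D.map e
  set N : Matrix (Fin (n+1)) (Fin (n+1)) ℝ := Matrix.of ⇑D' with hN
  have hNik : ∀ i k, N i k = d i k := by
    intro i k
    simp only [hN, Matrix.of_apply, D', Basis.map_apply, hD]
    rfl
  have hvol : volume (ZSpan.fundamentalDomain D') = ENNReal.ofReal |N.det| :=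
    ZSpan.volume_fundamentalDomain D'
  have hNdet : N.det ≠ 0 := by
    intro h
    have h2 := ZSpan.measure_fundamentalDomain_ne_zero D' (μ := volume)
    rw [hvol, h] at h2
    simp at h2
  have hGram : G = N * N.transpose := by
    ext i j
    rw [hG, Matrix.mul_apply]
    have h1 : (inner ℝ (c i) (c j) : ℝ) = (inner ℝ (d i) (d j) : ℝ) := by
      rw [φ.inner_map_map]
      rfl
    rw [h1, PiLp.inner_apply]
    refine Finset.sum_congr rfl fun k _ => ?_
    rw [Matrix.transpose_apply, hNik, hNik]
    simp [RCLike.inner_apply, starRingEnd_apply]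
    ring
  have hGdet : G.det = N.det ^ 2 := by
    rw [hGram, Matrix.det_mul, Matrix.det_transpose, sq]
  have hGpos : 0 < G.det := by
    rw [hGdet, ← sq_abs]
    exact pow_pos (abs_pos.mpr hNdet) 2
  refine ⟨hGpos, ?_⟩
  set s : ℝ := |N.det| ^ ((1:ℝ)/((n:ℝ)+1)) with hs
  have habs : 0 < |N.det| := abs_pos.mpr hNdet
  have hspos : 0 < s := Real.rpow_pos_of_pos habs _
  have hsr : s ^ (n+1) = |N.det| := by
    rw [hs, ← Real.rpow_natCast (|N.det| ^ ((1:ℝ)/((n:ℝ)+1))) (n+1), ← Real.rpow_mul habs.le]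
    push_cast
    rw [one_div, inv_mul_cancel₀ (by positivity), Real.rpow_one]
  have hV : volume (ZSpan.fundamentalDomain D') ≤ ENNReal.ofReal s ^ (n+1) := by
    rw [hvol, ← ENNReal.ofReal_pow hspos.le, hsr]
  obtain ⟨v', hv'mem, hv'ne, hv'bd⟩ := mink' D' hV
  let f : (Fin (n+1) → ℝ) →ₗ[ℤ] E :=
    ((E₀.subtype.restrictScalars ℤ).comp
      ((φ.symm.toLinearEquiv.toLinearMap.restrictScalars ℤ).comp
        (e.symm.toLinearMap.restrictScalars ℤ)))
  have hfd : ∀ j, f (D' j) = c j := by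
    intro j
    simp only [f, D', Basis.map_apply, LinearMap.coe_comp, Function.comp_apply,
      LinearMap.coe_restrictScalars, LinearEquiv.coe_coe, LinearEquiv.symm_apply_apply, hD]
    simp only [d, LinearIsometryEquiv.coe_toLinearEquiv, LinearIsometryEquiv.symm_apply_apply]
    rfl
  have hfv : f v' = ((φ.symm (e.symm v') : E₀) : E) := rfl
  refine ⟨f v', ?_, ?_, ?_⟩
  · apply mem_latE_of_mem_span
    have hmap := Submodule.mem_map_of_mem (f := f) hv'mem
    rw [Submodule.map_span, ← Set.range_comp] at hmap
    have : (⇑f ∘ ⇑D') = c := funext hfd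
    rwa [this] at hmap
  · rw [hfv]
    intro h
    apply hv'ne
    have h1 : (φ.symm (e.symm v') : E₀) = 0 := by
      exact_mod_cast h
    have h2 : e.symm v' = 0 := by
      have := congrArg φ h1
      simpa using this
    have := congrArg e h2
    simpa using this
  · rw [hfv]
    have hnorm1 : ‖((φ.symm (e.symm v') : E₀) : E)‖ = ‖e.symm v'‖ := by
      rw [Submodule.norm_coe]
      exact φ.symm.norm_map _
    rw [hnorm1]
    have hnorm2 : ‖e.symm v'‖ ≤ Real.sqrt ((n:ℝ)+1) * s := by
      rw [EuclideanSpace.norm_eq]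
      have happ : ∀ k, (e.symm v') k = v' k := fun k => rfl
      have hsum : (∑ k, ‖(e.symm v') k‖^2) ≤ ((n:ℝ)+1) * s^2 := by
        calc (∑ k, ‖(e.symm v') k‖^2) ≤ ∑ _k : Fin (n+1), s^2 := by
              refine Finset.sum_le_sum fun k _ => ?_
              rw [happ, Real.norm_eq_abs]
              exact pow_le_pow_left₀ (abs_nonneg _) (hv'bd k) 2
          _ = ((n:ℝ)+1) * s^2 := by
              rw [Finset.sum_const, Finset.card_fin]
              push_cast; ring
      calc Real.sqrt (∑ k, ‖(e.symm v') k‖^2) ≤ Real.sqrt (((n:ℝ)+1) * s^2) :=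
            Real.sqrt_le_sqrt hsum
        _ = Real.sqrt ((n:ℝ)+1) * s := by
            rw [Real.sqrt_mul (by positivity), Real.sqrt_sq hspos.le]
    refine hnorm2.trans (le_of_eq ?_)
    congr 1
    rw [hGdet, ← sq_abs, hs]
    rw [← Real.rpow_natCast |N.det| 2, ← Real.rpow_mul habs.le]
    congr 1
    field_simp
    norm_num

private lemma gram_dual {E : Type*} [NormedAddCommGroup E] [InnerProductSpace ℝ E]
    {r : ℕ} {b b' : Fin r → E}
    (hb : LinearIndependent ℝ b)
    (hspan : ∀ j, b' j ∈ span ℝ (Set.range b))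
    (hinner : ∀ i j : Fin r, (inner ℝ (b i) (b' j) : ℝ) =
      if (i : ℕ) + (j : ℕ) + 1 = r then 1 else 0) :
    Matrix.det (Matrix.of fun i j : Fin r => (inner ℝ (b' i) (b' j) : ℝ)) *
      Matrix.det (Matrix.of fun i j : Fin r => (inner ℝ (b i) (b j) : ℝ)) = 1 := by
  classical
  set G : Matrix (Fin r) (Fin r) ℝ := Matrix.of fun i j => (inner ℝ (b i) (b j) : ℝ) with hG
  set G' : Matrix (Fin r) (Fin r) ℝ := Matrix.of fun i j => (inner ℝ (b' i) (b' j) : ℝ) with hG'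
  set J : Matrix (Fin r) (Fin r) ℝ :=
    Matrix.of fun i j : Fin r => if (i : ℕ) + (j : ℕ) + 1 = r then (1:ℝ) else 0 with hJ
  let β : Basis (Fin r) ℝ (span ℝ (Set.range b)) := Basis.span hb
  set M : Matrix (Fin r) (Fin r) ℝ :=
    Matrix.of fun k j => β.repr ⟨b' j, hspan j⟩ k with hM
  have hb' : ∀ j, b' j = ∑ k, M k j • b k := by
    intro j
    have h1 := β.sum_repr ⟨b' j, hspan j⟩
    have h2 : ((∑ i, β.repr ⟨b' j, hspan j⟩ i • β i : span ℝ (Set.range b)) : E) = b' j :=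
      congrArg Subtype.val h1
    rw [← h2, AddSubmonoidClass.coe_finset_sum]
    refine Finset.sum_congr rfl fun k _ => ?_
    rw [hM]
    simp [β, Basis.span_apply]
  have h1 : J = G * M := by
    ext i j
    rw [hJ, Matrix.of_apply, ← hinner i j, hb' j, inner_sum, Matrix.mul_apply]
    refine Finset.sum_congr rfl fun k _ => ?_
    rw [real_inner_smul_right]
    simp [hG, hM]
    ring
  have h2 : G' = M.transpose * J := by
    ext i j
    rw [hG', Matrix.of_apply, hb' i, sum_inner, Matrix.mul_apply]
    refine Finset.sum_congr rfl fun k _ => ?_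
    rw [real_inner_smul_left, hinner, Matrix.transpose_apply]
    simp [hM, hJ]
  have h3 : J * J = 1 := by
    ext i k
    rw [Matrix.mul_apply]
    rw [Finset.sum_eq_single (Fin.rev i)]
    · have hcond : (i : ℕ) + ((Fin.rev i) : ℕ) + 1 = r := by
        rw [Fin.val_rev]
        omega
      have hcond2 : (((Fin.rev i) : ℕ) + (k : ℕ) + 1 = r) ↔ i = k := by
        rw [Fin.val_rev, Fin.ext_iff]
        omega
      simp only [hJ, Matrix.of_apply, hcond, if_true, one_mul, Matrix.one_apply]
      exact if_congr hcond2 rfl rfl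
    · intro j _ hj
      have : ¬ ((i : ℕ) + (j : ℕ) + 1 = r) := by
        intro hc
        apply hj
        rw [Fin.ext_iff, Fin.val_rev]
        omega
      simp [hJ, this]
    · intro h
      exact absurd (Finset.mem_univ _) h
  have hdJ : J.det * J.det = 1 := by
    rw [← Matrix.det_mul, h3, Matrix.det_one]
  have hd1 : J.det = G.det * M.det := by rw [h1, Matrix.det_mul]
  have hd2 : G'.det = M.transpose.det * J.det := by rw [h2, Matrix.det_mul]
  rw [hd2, Matrix.det_transpose]
  calc M.det * J.det * G.det = J.det * (G.det * M.det) := by ring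
    _ = J.det * J.det := by rw [← hd1]
    _ = 1 := hdJ

private lemma detG {m n : ℕ} (A : Matrix (Fin m) (Fin (n+1)) ℤ)
    (U : Matrix (Fin (n+1)) (Fin (n+1)) ℤ)
    (hU : IsUnit U.det) (C : Matrix (Fin m ⊕ Fin (n+1)) (Fin (n+1)) ℝ)
    (hC : C = (Matrix.fromRows A (1 : Matrix (Fin (n + 1)) (Fin (n + 1)) ℤ) * U).map
      (Int.cast : ℤ → ℝ)) :
    Matrix.det (Matrix.of fun i j : Fin (n+1) =>
        (inner ℝ (colsE' (n+1) C i) (colsE' (n+1) C j) : ℝ))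
      = ((A * A.transpose + 1).det : ℝ) := by
  set B := Matrix.fromRows A (1 : Matrix (Fin (n+1)) (Fin (n+1)) ℤ) with hB
  have hGCC : (Matrix.of fun i j : Fin (n+1) =>
      (inner ℝ (colsE' (n+1) C i) (colsE' (n+1) C j) : ℝ)) = C.transpose * C := by
    ext i j
    rw [Matrix.of_apply, PiLp.inner_apply, Matrix.mul_apply]
    refine Finset.sum_congr rfl fun a _ => ?_
    simp [colsE', RCLike.inner_apply, starRingEnd_apply, WithLp.equiv_symm_apply, PiLp.toLp_apply,
      Matrix.transpose_apply]
    ring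
  have hU2 : U.det * U.det = 1 := by
    rcases Int.isUnit_iff.mp hU with h | h <;> rw [h] <;> norm_num
  have hBB : B.transpose * B = A.transpose * A + 1 := by
    rw [hB, Matrix.transpose_fromRows, Matrix.transpose_one, Matrix.fromCols_mul_fromRows,
      Matrix.one_mul]
  have key : ((B * U).transpose * (B * U)).det = (A * A.transpose + 1).det := by
    rw [Matrix.transpose_mul]
    calc (U.transpose * B.transpose * (B * U)).det
        = (U.transpose * (B.transpose * B) * U).det := by
          rw [Matrix.mul_assoc, ← Matrix.mul_assoc B.transpose, ← Matrix.mul_assoc]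
      _ = U.transpose.det * ((A.transpose * A + 1).det * U.det) := by
          rw [hBB, Matrix.det_mul, Matrix.det_mul, mul_assoc]
      _ = (A.transpose * A + 1).det * (U.det * U.det) := by
          rw [Matrix.det_transpose]; ring
      _ = (A.transpose * A + 1).det := by rw [hU2, mul_one]
      _ = (A * A.transpose + 1).det := Matrix.det_mul_add_one_comm A.transpose A
    rfl
  have hc2 : ((B * U).map (Int.cast : ℤ → ℝ)) = (B * U).map (⇑(Int.castRingHom ℝ)) := rfl
  rw [hGCC, hC, hc2, ← Matrix.transpose_map, ← Matrix.map_mul,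
    ← RingHom.mapMatrix_apply, ← RingHom.map_det, key]
  rfl


set_option maxHeartbeats 1000000

/-- if the columns of `(A; I)U` (with `U` unimodular) form an RKZ-reduced basis
of `L_R(A)`, then the width of `Q_R = {y : ℓ ≤ (A; I)U y ≤ w}` along the last unit vector is
at most `√n ‖w - ℓ‖ / det(A Aᵀ + I)^{1/(2n)}`. Here `n` is `n + 1`. -/

theorem rangespace_width_bound (m n : ℕ) (A : Matrix (Fin m) (Fin (n + 1)) ℤ)
    (U : Matrix (Fin (n + 1)) (Fin (n + 1)) ℤ) (hU : IsUnit U.det)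
    (C : Matrix (Fin m ⊕ Fin (n + 1)) (Fin (n + 1)) ℝ)
    (hC : C = (Matrix.fromRows A (1 : Matrix (Fin (n + 1)) (Fin (n + 1)) ℤ) * U).map
      (Int.cast : ℤ → ℝ))
    (hindep : LinearIndependent ℝ (colsE' (n + 1) C))
    (hrkz : RKZReduced (colsE' (n + 1) C))
    (ℓ w : EuclideanSpace ℝ (Fin m ⊕ Fin (n + 1)))
    (Q : Set (Fin (n + 1) → ℝ))
    (hQ : Q = { y | ∀ i, ℓ i ≤ C.mulVec y i ∧ C.mulVec y i ≤ w i })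
    (hne : Q.Nonempty)
    (hba : BddAbove ((fun y => y (Fin.last n)) '' Q))
    (hbb : BddBelow ((fun y => y (Fin.last n)) '' Q)) :
    sSup ((fun y => y (Fin.last n)) '' Q) - sInf ((fun y => y (Fin.last n)) '' Q)
      ≤ Real.sqrt (n + 1) * ‖w - ℓ‖ /
        (((A * A.transpose + 1).det : ℝ)) ^ ((1 : ℝ) / (2 * (n + 1))) := by
  classical
  set b := colsE' (n + 1) C with hb
  obtain ⟨b', hspan, hinner, hKZ⟩ := hrkz
  set D : ℝ := ((A * A.transpose + 1).det : ℝ) with hD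
  have hdetG : Matrix.det (Matrix.of fun i j : Fin (n+1) => (inner ℝ (b i) (b j) : ℝ)) = D := by
    rw [hb]
    exact detG A U hU C hC
  -- b' is linearly independent
  have hb'indep : LinearIndependent ℝ b' := by
    rw [Fintype.linearIndependent_iff]
    intro g hg j
    have hcond : ∀ k : Fin (n+1), (((Fin.rev j) : ℕ) + (k:ℕ) + 1 = n+1) ↔ k = j := by
      intro k
      have hk := k.isLt
      have hj := j.isLt
      rw [Fin.val_rev, Fin.ext_iff]
      omega
    have h2 : ∀ k : Fin (n+1), g k * (inner ℝ (b (Fin.rev j)) (b' k) : ℝ)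
        = if k = j then g k else 0 := by
      intro k
      rw [hinner, if_congr (hcond k) rfl rfl]
      by_cases hk : k = j <;> simp [hk]
    have h : (inner ℝ (b (Fin.rev j)) (∑ i, g i • b' i) : ℝ) = 0 := by
      rw [hg, inner_zero_right]
    rw [inner_sum] at h
    simp_rw [real_inner_smul_right] at h
    rw [Finset.sum_congr rfl (fun k _ => h2 k)] at h
    simpa using h
  -- shortest-vector bound for the dual lattice
  set G' : Matrix (Fin (n+1)) (Fin (n+1)) ℝ :=
    Matrix.of fun i j : Fin (n+1) => (inner ℝ (b' i) (b' j) : ℝ) with hG'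
  obtain ⟨hG'pos, v, hvmem, hvne, hvbd⟩ := exists_short hb'indep G' (fun i j => rfl)
  have hdual := gram_dual hindep hspan hinner
  rw [← hG', hdetG] at hdual
  have hDpos : 0 < D := by nlinarith [hG'pos, hdual]
  have hG'det : G'.det = D⁻¹ := eq_inv_of_mul_eq_one_left hdual
  -- KZ reducedness: b' 0 is a shortest vector
  have hPP : ∀ x : EuclideanSpace ℝ (Fin m ⊕ Fin (n+1)),
      projPerp (b' '' {j : Fin (n+1) | j < 0}) x = x := by
    intro x
    have hset : {j : Fin (n+1) | j < (0 : Fin (n+1))} = (∅ : Set (Fin (n+1))) := by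
      ext k
      simp [Fin.lt_def]
    rw [projPerp, hset, Set.image_empty]
    have hmem : x ∈ (span ℝ (∅ : Set (EuclideanSpace ℝ (Fin m ⊕ Fin (n+1)))))ᗮ := by
      rw [Submodule.span_empty, Submodule.bot_orthogonal_eq_top]
      exact Submodule.mem_top
    exact Submodule.starProjection_eq_self_iff.mpr hmem
  have hfun0 : (fun j => projPerp (b' '' {j : Fin (n+1) | j < (0 : Fin (n+1))}) (b' j)) = b' :=
    funext fun j => hPP (b' j)
  have hb'0le : ‖b' 0‖ ≤ ‖v‖ := by
    have h := hKZ 0 v (by rw [hfun0]; exact hvmem) hvne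
    rwa [hPP (b' 0)] at h
  have hb'0 : ‖b' 0‖ ≤ Real.sqrt ((n:ℝ)+1) * D⁻¹ ^ ((1:ℝ)/(2*((n:ℝ)+1))) := by
    refine hb'0le.trans ?_
    rw [← hG'det]
    exact hvbd
  -- width bound
  have hip : ∀ u v : ℝ, (inner ℝ u v : ℝ) = u * v := fun u v => by
    simp [RCLike.inner_apply]
    ring
  have hbj : ∀ j, (inner ℝ (b j) (b' 0) : ℝ) = ∑ a, C a j * (b' 0) a := by
    intro j
    rw [PiLp.inner_apply]
    refine Finset.sum_congr rfl fun a _ => ?_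
    rw [hip]
    have hjb : b j a = C a j := by
      rw [hb]
      simp [colsE', WithLp.equiv_symm_apply, PiLp.toLp_apply]
    rw [hjb]
  have key : ∀ y₁ ∈ Q, ∀ y₂ ∈ Q,
      y₁ (Fin.last n) - y₂ (Fin.last n) ≤ ‖b' 0‖ * ‖w - ℓ‖ := by
    intro y₁ hy₁ y₂ hy₂
    rw [hQ] at hy₁ hy₂
    simp only [Set.mem_setOf_eq] at hy₁ hy₂
    set z : EuclideanSpace ℝ (Fin m ⊕ Fin (n+1)) :=
      (WithLp.equiv 2 ((Fin m ⊕ Fin (n+1)) → ℝ)).symm (C.mulVec y₁ - C.mulVec y₂) with hz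
    have hza : ∀ a, z a = ∑ j, C a j * (y₁ j - y₂ j) := by
      intro a
      have h1 : z a = C.mulVec y₁ a - C.mulVec y₂ a := by
        rw [hz, WithLp.equiv_symm_apply, PiLp.toLp_apply, Pi.sub_apply]
      rw [h1]
      simp only [Matrix.mulVec, dotProduct]
      rw [← Finset.sum_sub_distrib]
      exact Finset.sum_congr rfl fun j _ => by ring
    have hzc : (inner ℝ z (b' 0) : ℝ) = y₁ (Fin.last n) - y₂ (Fin.last n) := by
      rw [PiLp.inner_apply]
      have hterm : ∀ a, (inner ℝ (z a) ((b' 0) a) : ℝ)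
          = ∑ j, (y₁ j - y₂ j) * (C a j * (b' 0) a) := by
        intro a
        rw [hip, hza, Finset.sum_mul]
        exact Finset.sum_congr rfl fun j _ => by ring
      rw [Finset.sum_congr rfl fun a _ => hterm a, Finset.sum_comm]
      have hcond : ∀ j : Fin (n+1),
          ((j:ℕ) + ((0 : Fin (n+1)):ℕ) + 1 = n+1) ↔ j = Fin.last n := by
        intro j
        have := j.isLt
        rw [Fin.val_zero, Fin.ext_iff, Fin.val_last]
        omega
      calc ∑ j, ∑ a, (y₁ j - y₂ j) * (C a j * (b' 0) a)
          = ∑ j, (y₁ j - y₂ j) * (inner ℝ (b j) (b' 0) : ℝ) := by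
            refine Finset.sum_congr rfl fun j _ => ?_
            rw [hbj, Finset.mul_sum]
        _ = ∑ j, (if j = Fin.last n then (y₁ j - y₂ j) else 0) := by
            refine Finset.sum_congr rfl fun j _ => ?_
            rw [hinner, if_congr (hcond j) rfl rfl]
            by_cases hj : j = Fin.last n <;> simp [hj]
        _ = y₁ (Fin.last n) - y₂ (Fin.last n) := by simp
    have hzb : ‖z‖ ≤ ‖w - ℓ‖ := by
      rw [EuclideanSpace.norm_eq, EuclideanSpace.norm_eq]
      apply Real.sqrt_le_sqrt
      refine Finset.sum_le_sum fun a _ => ?_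
      have h1 := hy₁ a
      have h2 := hy₂ a
      have hza2 : z a = C.mulVec y₁ a - C.mulVec y₂ a := by
        rw [hz, WithLp.equiv_symm_apply, PiLp.toLp_apply, Pi.sub_apply]
      have hwla : (w - ℓ) a = w a - ℓ a := by simp
      rw [hza2, hwla, Real.norm_eq_abs, Real.norm_eq_abs]
      refine pow_le_pow_left₀ (abs_nonneg _) ?_ 2
      rw [abs_le]
      have h3 := le_abs_self (w a - ℓ a)
      have h4 := neg_abs_le (w a - ℓ a)
      constructor <;> nlinarith [h1.1, h1.2, h2.1, h2.2]
    calc y₁ (Fin.last n) - y₂ (Fin.last n) = (inner ℝ z (b' 0) : ℝ) := hzc.symm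
      _ ≤ |(inner ℝ z (b' 0) : ℝ)| := le_abs_self _
      _ ≤ ‖z‖ * ‖b' 0‖ := abs_real_inner_le_norm _ _
      _ ≤ ‖w - ℓ‖ * ‖b' 0‖ := mul_le_mul_of_nonneg_right hzb (norm_nonneg _)
      _ = ‖b' 0‖ * ‖w - ℓ‖ := mul_comm _ _
  -- conclude
  have himgne : ((fun y => y (Fin.last n)) '' Q).Nonempty := hne.image _
  have hwidth : sSup ((fun y => y (Fin.last n)) '' Q) - sInf ((fun y => y (Fin.last n)) '' Q)
      ≤ ‖b' 0‖ * ‖w - ℓ‖ := by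
    have h1 : sSup ((fun y => y (Fin.last n)) '' Q)
        ≤ sInf ((fun y => y (Fin.last n)) '' Q) + ‖b' 0‖ * ‖w - ℓ‖ := by
      apply csSup_le himgne
      rintro a ⟨y₁, hy₁, rfl⟩
      have h2 : y₁ (Fin.last n) - ‖b' 0‖ * ‖w - ℓ‖ ≤ sInf ((fun y => y (Fin.last n)) '' Q) := by
        apply le_csInf himgne
        rintro bb ⟨y₂, hy₂, rfl⟩
        have := key y₁ hy₁ y₂ hy₂
        simp only
        linarith
      simp only
      linarith
    linarith
  refine hwidth.trans ?_
  calc ‖b' 0‖ * ‖w - ℓ‖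
      ≤ (Real.sqrt ((n:ℝ)+1) * D⁻¹ ^ ((1:ℝ)/(2*((n:ℝ)+1)))) * ‖w - ℓ‖ :=
        mul_le_mul_of_nonneg_right hb'0 (norm_nonneg _)
    _ = Real.sqrt ((n:ℝ)+1) * ‖w - ℓ‖ / D ^ ((1:ℝ)/(2*((n:ℝ)+1))) := by
        rw [Real.inv_rpow hDpos.le, div_eq_mul_inv]
        ring
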